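/- arXiv:1911.02776 — 3 statements merged into one kernel-verified Lean document; each statement's English description precedes it below -/
import Mathlib

section
/- The function z(x,t) = (4/π)[sin(x)cos(t) + sin(3x)cos(3t)/3] (the N = 1 partial sum) satisfies z(x,t) ≥ 0 for all x ∈ [0, 0.78] and t ∈ [0, 0.78]. -/
open Real

/-- The `N = 1` partial sum `z(x,t) = (4/π)[sin x cos t + sin(3x)cos(3t)/3]` is
nonnegative on `[0, 0.78] × [0, 0.78]`. -/
theorem z1_nonneg :
    ∀ x ∈ Set.Icc (0:ℝ) 0.78, ∀ t ∈ Set.Icc (0:ℝ) 0.78,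
      0 ≤ (4 / π) * (Real.sin x * Real.cos t
        + Real.sin (3 * x) * Real.cos (3 * t) / 3) := by
  intro x hx t ht
  obtain ⟨hx0, hx1⟩ := hx
  obtain ⟨ht0, ht1⟩ := ht
  have hpi : (3.14 : ℝ) < π := by linarith [Real.pi_gt_d6]
  have hx1' : x ≤ 0.78 := hx1
  have ht1' : t ≤ 0.78 := ht1
  have hs0 : 0 ≤ Real.sin x :=
    Real.sin_nonneg_of_nonneg_of_le_pi hx0 (by norm_num at hx1' ⊢; linarith)
  have hs1 : Real.sin x ≤ 1 := Real.sin_le_one x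
  have hc1 : Real.cos t ≤ 1 := Real.cos_le_one t
  have hc0 : Real.sqrt 2 / 2 ≤ Real.cos t := by
    have h4 : t ≤ π / 4 := by norm_num at ht1' ⊢; linarith
    calc Real.sqrt 2 / 2 = Real.cos (π / 4) := (Real.cos_pi_div_four).symm
      _ ≤ Real.cos t := Real.cos_le_cos_of_nonneg_of_le_pi ht0 (by linarith) h4
  have hsq2 : Real.sqrt 2 ^ 2 = 2 := Real.sq_sqrt (by norm_num)
  have hcnn : 0 ≤ Real.cos t := le_trans (by positivity) hc0
  have hc2 : (1 : ℝ) / 2 ≤ Real.cos t ^ 2 := by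
    nlinarith [Real.sqrt_nonneg 2]
  have key : 0 ≤ Real.sin x * Real.cos t
      + Real.sin (3 * x) * Real.cos (3 * t) / 3 := by
    rw [Real.sin_three_mul, Real.cos_three_mul]
    set s := Real.sin x
    set c := Real.cos t
    nlinarith [mul_nonneg (mul_nonneg (mul_nonneg hs0
        (by nlinarith : (0:ℝ) ≤ 1 - s ^ 2)) hcnn)
        (by nlinarith : (0:ℝ) ≤ 2 * c ^ 2 - 1),
      mul_nonneg (mul_nonneg (mul_nonneg (mul_nonneg hs0 hs0) hs0) hcnn)
        (by nlinarith : (0:ℝ) ≤ 2 * c ^ 2 - 1),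
      mul_nonneg (mul_nonneg (mul_nonneg (mul_nonneg hs0 hs0) hs0) hcnn)
        (by nlinarith : (0:ℝ) ≤ 1 - c ^ 2)]
  positivity
end

section
/- There exist real numbers x, t with 0 ≤ x ≤ 0.4 and 0 ≤ t ≤ 0.4 such that (4/π)[sin(x)cos(t) + sin(3x)cos(3t)/3 + sin(5x)cos(5t)/5 + sin(7x)cos(7t)/7] < 0; hence the N = 3 partial sum fails to be nonnegative on [0, 0.4] × [0, 0.4]. -/
open Real

private lemma cos_interval {x lo hi : ℝ} (hx0 : 0 ≤ x) (hx1 : x ≤ 1)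
    (hlo : lo ≤ 1 - x ^ 2 / 2 - x ^ 4 * (5 / 96))
    (hhi : 1 - x ^ 2 / 2 + x ^ 4 * (5 / 96) ≤ hi) :
    lo ≤ Real.cos x ∧ Real.cos x ≤ hi := by
  have h := Real.cos_bound (x := x) (by rwa [abs_of_nonneg hx0])
  rw [abs_of_nonneg hx0] at h
  rw [abs_le] at h
  constructor <;> nlinarith [h.1, h.2]

set_option maxHeartbeats 1600000 in
/-- The `N = 3` partial sum takes a negative value somewhere on `[0, 0.4] × [0, 0.4]`,
so it fails to be nonnegative on that square. -/
theorem z3_neg_somewhere :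
    ∃ x t : ℝ, 0 ≤ x ∧ x ≤ 0.4 ∧ 0 ≤ t ∧ t ≤ 0.4 ∧
      (4 / π) * (Real.sin x * Real.cos t
        + Real.sin (3 * x) * Real.cos (3 * t) / 3
        + Real.sin (5 * x) * Real.cos (5 * t) / 5
        + Real.sin (7 * x) * Real.cos (7 * t) / 7) < 0 := by
  refine ⟨1/20, 2/5, by norm_num, by norm_num, by norm_num, by norm_num, ?_⟩
  have hpi : (0:ℝ) < 4 / π := by positivity
  rw [show (3:ℝ) * (1/20) = 3/20 by norm_num, show (5:ℝ) * (1/20) = 1/4 by norm_num,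
      show (7:ℝ) * (1/20) = 7/20 by norm_num,
      show (3:ℝ) * (2/5) = 2 * (3/5) by norm_num, show (5:ℝ) * (2/5) = 2 * 1 by norm_num,
      show (7:ℝ) * (2/5) = 2 * (2 * (7/10)) by norm_num,
      Real.cos_two_mul, Real.cos_two_mul, Real.cos_two_mul, Real.cos_two_mul]
  apply mul_neg_of_pos_of_neg hpi
  -- sin bounds
  have hs1u : Real.sin (1/20) ≤ 5/100 := by
    have := Real.sin_lt (by norm_num : (0:ℝ) < 1/20); linarith
  have hs1l : (0:ℝ) ≤ Real.sin (1/20) :=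
    Real.sin_nonneg_of_nonneg_of_le_pi (by norm_num) (by nlinarith [Real.pi_gt_three])
  have hs3u : Real.sin (3/20) ≤ 15/100 := by
    have := Real.sin_lt (by norm_num : (0:ℝ) < 3/20); linarith
  have hs3l : (0:ℝ) ≤ Real.sin (3/20) :=
    Real.sin_nonneg_of_nonneg_of_le_pi (by norm_num) (by nlinarith [Real.pi_gt_three])
  have hs5l : (246:ℝ)/1000 ≤ Real.sin (1/4) := by
    have := Real.sin_gt_sub_cube (by norm_num : (0:ℝ) < 1/4)
    nlinarith
  have hs7l : (3392:ℝ)/10000 ≤ Real.sin (7/20) := by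
    have := Real.sin_gt_sub_cube (by norm_num : (0:ℝ) < 7/20)
    nlinarith
  -- cos bounds
  have hc04 := cos_interval (x := 2/5) (by norm_num) (by norm_num)
    (hlo := by norm_num) (hhi := by norm_num) (lo := 0) (hi := 9214/10000)
  have hc06 := cos_interval (x := 3/5) (by norm_num) (by norm_num)
    (hlo := by norm_num) (hhi := by norm_num) (lo := 8132/10000) (hi := 8268/10000)
  have hc1 := cos_interval (x := 1) (by norm_num) (by norm_num)
    (hlo := by norm_num) (hhi := by norm_num) (lo := 4479/10000) (hi := 5521/10000)
  have hc07 := cos_interval (x := 7/10) (by norm_num) (by norm_num)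
    (hlo := by norm_num) (hhi := by norm_num) (lo := 7424/10000) (hi := 7676/10000)
  -- cos(7/5) = 2 cos(7/10)^2 - 1 ∈ [0.1023, 0.1785]
  have hc14l : (1023:ℝ)/10000 ≤ 2 * Real.cos (7/10) ^ 2 - 1 := by nlinarith [hc07.1, hc07.2]
  have hc14u : 2 * Real.cos (7/10) ^ 2 - 1 ≤ (1785:ℝ)/10000 := by nlinarith [hc07.1, hc07.2]
  -- cos(6/5) ∈ [0, 0.3672]
  have hc12l : (0:ℝ) ≤ 2 * Real.cos (3/5) ^ 2 - 1 := by nlinarith [hc06.1, hc06.2]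
  have hc12u : 2 * Real.cos (3/5) ^ 2 - 1 ≤ (3672:ℝ)/10000 := by nlinarith [hc06.1, hc06.2]
  -- cos 2 ≤ -0.3903
  have hc2u : 2 * Real.cos 1 ^ 2 - 1 ≤ -(3903:ℝ)/10000 := by nlinarith [hc1.1, hc1.2]
  -- cos(14/5) = 2 cos(7/5)^2 - 1 ≤ -0.9362
  have key : ∀ c : ℝ, (1023:ℝ)/10000 ≤ c → c ≤ (1785:ℝ)/10000 →
      2 * c ^ 2 - 1 ≤ -(9362:ℝ)/10000 := by intro c h1 h2; nlinarith
  have hc28u : 2 * (2 * Real.cos (7/10) ^ 2 - 1) ^ 2 - 1 ≤ -(9362:ℝ)/10000 :=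
    key _ hc14l hc14u
  have hsin5pos : (0:ℝ) < Real.sin (1/4) := lt_of_lt_of_le (by norm_num) hs5l
  have hsin7pos : (0:ℝ) < Real.sin (7/20) := lt_of_lt_of_le (by norm_num) hs7l
  have hA : Real.sin (1/20) * Real.cos (2/5) ≤ 5/100 * (9214/10000) :=
    mul_le_mul hs1u hc04.2 hc04.1 (by norm_num)
  have hB : Real.sin (3/20) * (2 * Real.cos (3/5) ^ 2 - 1) ≤ 15/100 * (3672/10000) :=
    mul_le_mul hs3u hc12u hc12l (by norm_num)
  have hC : Real.sin (1/4) * (2 * Real.cos 1 ^ 2 - 1) ≤ 246/1000 * (-(3903:ℝ)/10000) := by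
    calc Real.sin (1/4) * (2 * Real.cos 1 ^ 2 - 1)
        ≤ Real.sin (1/4) * (-(3903:ℝ)/10000) :=
          mul_le_mul_of_nonneg_left hc2u (le_of_lt hsin5pos)
      _ ≤ 246/1000 * (-(3903:ℝ)/10000) := by nlinarith [hs5l]
  have hD : Real.sin (7/20) * (2 * (2 * Real.cos (7/10) ^ 2 - 1) ^ 2 - 1)
      ≤ 3392/10000 * (-(9362:ℝ)/10000) := by
    calc Real.sin (7/20) * (2 * (2 * Real.cos (7/10) ^ 2 - 1) ^ 2 - 1)
        ≤ Real.sin (7/20) * (-(9362:ℝ)/10000) :=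
          mul_le_mul_of_nonneg_left hc28u (le_of_lt hsin7pos)
      _ ≤ 3392/10000 * (-(9362:ℝ)/10000) := by nlinarith [hs7l]
  linarith [hA, hB, hC, hD]
end

section
/- Define u₁(x,t,α) = U_{01}(α)·(4/π)sin(x)cos(t) and u₂(x,t,α) = U_{02}(α)·(4/π)sin(x)cos(t), where U_{01}, U_{02} : [0,1] → ℝ are the level functions of a fuzzy number Ũ₀ (U_{01} nondecreasing, U_{02} nonincreasing, U_{01} ≤ U_{02}). Then for i = 1, 2 and every α ∈ [0,1]: (a) ∂²uᵢ/∂t²(x,t,α) = ∂²uᵢ/∂x²(x,t,α) for all (x,t); (b) uᵢ(0,t,α) = uᵢ(π,t,α) = 0; (c) ∂uᵢ/∂t(x,0,α) = 0; and (d) for every (x,t) ∈ [0,π] × [0,π/2], u₁(x,t,α) ≤ u₂(x,t,α), α ↦ u₁(x,t,α) is nondecreasing and α ↦ u₂(x,t,α) is nonincreasing, so [u₁(x,t,α), u₂(x,t,α)] defines the level sets of a fuzzy number; hence ũ(x,t) = Ũ₀ ⊙ (4/π)sin(x)cos(t) is a Seikkala solution of the fuzzy wave equation on [0,π] × [0,π/2].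 -/
open Real

lemma deriv_mul_cos' (c : ℝ) : (deriv fun s => c * Real.cos s) = fun s => c * -Real.sin s := by
  funext s
  simp [deriv_const_mul_field]

lemma deriv2_cos' (c t : ℝ) : deriv (deriv (fun s => c * Real.cos s)) t = c * -Real.cos t := by
  rw [deriv_mul_cos']
  have : (fun s => c * -Real.sin s) = fun s => (-c) * Real.sin s := by funext s; ring
  rw [this]
  simp [deriv_const_mul_field]

lemma deriv2_sin' (c x : ℝ) : deriv (deriv (fun y => c * Real.sin y)) x = c * -Real.sin x := by
  have h : (deriv fun y => c * Real.sin y) = fun y => c * Real.cos y := by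
    funext y; simp [deriv_const_mul_field]
  rw [h, deriv_mul_cos']

/-- `ũ(x,t) = Ũ₀ ⊙ (4/π) sin x cos t` is a Seikkala solution of the fuzzy wave equation
on `[0,π] × [0,π/2]`: each level function `uᵢ(x,t,α) = U₀ᵢ(α)(4/π) sin x cos t`
(a) solves the crisp wave equation, (b) vanishes at `x = 0` and `x = π`, (c) has zero
initial velocity, and (d) on `[0,π] × [0,π/2]` the pair `[u₁, u₂]` satisfies the
Goetschel–Voxman conditions, defining fuzzy-number level sets. -/
theorem seikkala_solution_n0
    (U₀₁ U₀₂ : ℝ → ℝ)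
    (hU₁ : MonotoneOn U₀₁ (Set.Icc (0:ℝ) 1))
    (hU₂ : AntitoneOn U₀₂ (Set.Icc (0:ℝ) 1))
    (hle : ∀ α ∈ Set.Icc (0:ℝ) 1, U₀₁ α ≤ U₀₂ α)
    (u₁ u₂ : ℝ → ℝ → ℝ → ℝ)
    (hu₁ : ∀ x t α : ℝ, u₁ x t α = U₀₁ α * ((4 / π) * Real.sin x * Real.cos t))
    (hu₂ : ∀ x t α : ℝ, u₂ x t α = U₀₂ α * ((4 / π) * Real.sin x * Real.cos t)) :
    (∀ α ∈ Set.Icc (0:ℝ) 1, ∀ x t : ℝ,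
      deriv (deriv (fun s => u₁ x s α)) t = deriv (deriv (fun y => u₁ y t α)) x ∧
      deriv (deriv (fun s => u₂ x s α)) t = deriv (deriv (fun y => u₂ y t α)) x) ∧
    (∀ α ∈ Set.Icc (0:ℝ) 1, ∀ t : ℝ,
      u₁ 0 t α = 0 ∧ u₁ π t α = 0 ∧ u₂ 0 t α = 0 ∧ u₂ π t α = 0) ∧
    (∀ α ∈ Set.Icc (0:ℝ) 1, ∀ x : ℝ,
      deriv (fun s => u₁ x s α) 0 = 0 ∧ deriv (fun s => u₂ x s α) 0 = 0) ∧
    (∀ x ∈ Set.Icc (0:ℝ) π, ∀ t ∈ Set.Icc (0:ℝ) (π / 2),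
      (∀ α ∈ Set.Icc (0:ℝ) 1, u₁ x t α ≤ u₂ x t α) ∧
      MonotoneOn (fun α => u₁ x t α) (Set.Icc (0:ℝ) 1) ∧
      AntitoneOn (fun α => u₂ x t α) (Set.Icc (0:ℝ) 1)) := by
  have ht₁ : ∀ (V : ℝ → ℝ) (u : ℝ → ℝ → ℝ → ℝ)
      (hu : ∀ x t α : ℝ, u x t α = V α * ((4 / π) * Real.sin x * Real.cos t)),
      ∀ α x t : ℝ, deriv (deriv (fun s => u x s α)) t = deriv (deriv (fun y => u y t α)) x := by
    intro V u hu α x t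
    have h1 : (fun s => u x s α) = fun s => (V α * ((4 / π) * Real.sin x)) * Real.cos s := by
      funext s; rw [hu]; ring
    have h2 : (fun y => u y t α) = fun y => (V α * ((4 / π) * Real.cos t)) * Real.sin y := by
      funext y; rw [hu]; ring
    rw [h1, h2, deriv2_cos', deriv2_sin']
    ring
  refine ⟨fun α _ x t => ⟨ht₁ U₀₁ u₁ hu₁ α x t, ht₁ U₀₂ u₂ hu₂ α x t⟩, ?_, ?_, ?_⟩
  · intro α _ t
    simp [hu₁, hu₂]
  · intro α _ x
    have h1 : (fun s => u₁ x s α) = fun s => (U₀₁ α * ((4 / π) * Real.sin x)) * Real.cos s := by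
      funext s; rw [hu₁]; ring
    have h2 : (fun s => u₂ x s α) = fun s => (U₀₂ α * ((4 / π) * Real.sin x)) * Real.cos s := by
      funext s; rw [hu₂]; ring
    rw [h1, h2, deriv_mul_cos', deriv_mul_cos']
    simp
  · intro x hx t ht
    have hsin : 0 ≤ Real.sin x := Real.sin_nonneg_of_mem_Icc hx
    have hcos : 0 ≤ Real.cos t :=
      Real.cos_nonneg_of_mem_Icc ⟨le_trans (by linarith [Real.pi_pos]) ht.1, ht.2⟩
    have hk : 0 ≤ (4 / π) * Real.sin x * Real.cos t := by
      have : 0 ≤ (4:ℝ) / π := by positivity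
      positivity
    refine ⟨fun α hα => ?_, ?_, ?_⟩
    · rw [hu₁, hu₂]
      exact mul_le_mul_of_nonneg_right (hle α hα) hk
    · intro a ha b hb hab
      simp only [hu₁]
      exact mul_le_mul_of_nonneg_right (hU₁ ha hb hab) hk
    · intro a ha b hb hab
      simp only [hu₂]
      exact mul_le_mul_of_nonneg_right (hU₂ ha hb hab) hk
end
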